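/- Let h ∈ ℝ, let f : ℝ₊ → [0,∞) be C³ with f'(1) = 0, and define L(λ) = v^{h/3} f(u) with v = λ₁λ₂², u = λ₁/λ₂. Define U₁(u) = κ(h)f(u) + (2h/3)uf'(u) + u²f''(u) and U₂(u) = 2κ(h)uf(u) + (h/3 − 1)u²f'(u) + (2u² + u³)·f'(u)/(u−1) − u³f''(u), where f'(u)/(u−1) is extended continuously at u = 1 by f''(1). Suppose φ ∈ C²([0,1]) satisfies φ(0) = 0, φ''(0) = 0, φ' > 0 on [0,1], and with u(r) = rφ'(r)/φ(r), v(r) = φ'(r)(φ(r)/r)², solves U₁(u(r)) φ''(r) + U₂(u(r)) (1/r)(φ'(r) − φ(r)/r) = μ r v(r)^{1−h/3} u(r) for r ∈ (0,1). Then φ solves D_r[ L,₁(φ'(r), φ(r)/r) ] + (2/r)[ L,₁(φ'(r), φ(r)/r) − (1/2) L,₂(φ'(r), φ(r)/r) ] = μ φ(r) on (0,1). Moreover, if g(u(1)) = 0, where g(u) = (h/3)f(u) + uf'(u), then L,₁(φ'(1), φ(1)) = 0. -/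

import Mathlib

open Set

noncomputable section

/-- `κ(h) = (h/3)(h/3 − 1)`. -/
def kap (h : ℝ) : ℝ := (h / 3) * (h / 3 - 1)

/-- The quotient `f'(u)/(u−1)`, extended continuously at `u = 1` by `f''(1)`. -/
noncomputable def Qf (f : ℝ → ℝ) (u : ℝ) : ℝ :=
  if u = 1 then deriv (deriv f) 1 else deriv f u / (u - 1)

/-- `U₁(u) = κ(h)f(u) + (2h/3)uf'(u) + u²f''(u)`. -/
noncomputable def U1 (h : ℝ) (f : ℝ → ℝ) (u : ℝ) : ℝ :=
  kap h * f u + (2 * h / 3) * u * deriv f u + u ^ 2 * deriv (deriv f) u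

/-- `U₂(u) = 2κ(h)uf(u) + (h/3 − 1)u²f'(u) + (2u² + u³)f'(u)/(u−1) − u³f''(u)`. -/
noncomputable def U2 (h : ℝ) (f : ℝ → ℝ) (u : ℝ) : ℝ :=
  2 * kap h * u * f u + (h / 3 - 1) * u ^ 2 * deriv f u
    + (2 * u ^ 2 + u ^ 3) * Qf f u - u ^ 3 * deriv (deriv f) u

lemma Qf_mul_sub_one {f : ℝ → ℝ} (hf'1 : deriv f 1 = 0) (u : ℝ) :
    Qf f u * (u - 1) = deriv f u := by
  unfold Qf
  by_cases hu : u = 1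
  · simp [hu, hf'1]
  · rw [if_neg hu, div_mul_cancel₀ _ (sub_ne_zero.mpr hu)]

lemma derivL1 (p : ℝ) (f : ℝ → ℝ) {s c : ℝ} (hs : 0 < s) (hc : 0 < c)
    (hf : DifferentiableAt ℝ f (s / c)) :
    deriv (fun x : ℝ => (x * c ^ 2) ^ p * f (x / c)) s
      = (s * c ^ 2) ^ p * (p * f (s / c) / s + deriv f (s / c) / c) := by
  have hsc : s * c ^ 2 ≠ 0 := by positivity
  have h1 : HasDerivAt (fun x : ℝ => x * c ^ 2) (c ^ 2) s := by
    simpa using (hasDerivAt_id s).mul_const (c ^ 2)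
  have h2 := h1.rpow_const (p := p) (Or.inl hsc)
  have h3 : HasDerivAt (fun x : ℝ => f (x / c)) (deriv f (s / c) * (1 / c)) s := by
    have hi : HasDerivAt (fun x : ℝ => x / c) (1 / c) s := by
      simpa using (hasDerivAt_id s).div_const c
    exact (hf.hasDerivAt).comp s hi
  have h4 : deriv (fun x : ℝ => (x * c ^ 2) ^ p * f (x / c)) s = _ := (h2.mul h3).deriv
  rw [h4, Real.rpow_sub_one hsc]
  field_simp

lemma derivL2 (p : ℝ) (f : ℝ → ℝ) {s c : ℝ} (hs : 0 < s) (hc : 0 < c)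
    (hf : DifferentiableAt ℝ f (s / c)) :
    deriv (fun x : ℝ => (s * x ^ 2) ^ p * f (s / x)) c
      = (s * c ^ 2) ^ p * (2 * p * f (s / c) - (s / c) * deriv f (s / c)) / c := by
  have hsc : s * c ^ 2 ≠ 0 := by positivity
  have h1 : HasDerivAt (fun x : ℝ => s * x ^ 2) (s * (2 * c)) c := by
    simpa using (hasDerivAt_pow 2 c).const_mul s
  have h2 := h1.rpow_const (p := p) (Or.inl hsc)
  have h3 : HasDerivAt (fun x : ℝ => f (s / x)) (deriv f (s / c) * (-(s / c ^ 2))) c := by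
    have hi : HasDerivAt (fun x : ℝ => s / x) (-(s / c ^ 2)) c := by
      have : HasDerivAt (fun x : ℝ => s / x) ((0 * c - s * 1) / c ^ 2) c :=
        (hasDerivAt_const c s).div (hasDerivAt_id c) hc.ne'
      simpa [neg_div] using this
    exact (hf.hasDerivAt).comp c hi
  have h4 : deriv (fun x : ℝ => (s * x ^ 2) ^ p * f (s / x)) c = _ := (h2.mul h3).deriv
  rw [h4, Real.rpow_sub_one hsc]
  field_simp
  ring

set_option maxHeartbeats 2000000 in
lemma keyalg (h μ r a b W F0 F1 F2 Q P : ℝ)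
    (hr : r ≠ 0) (ha : a ≠ 0) (hb : b ≠ 0) (hP : P ≠ 0)
    (hQ : Q * (r * b - a) = F1 * a)
    (hODE : (h/3*(h/3-1) * F0 + 2*h/3*(r*b/a)*F1 + (r*b/a)^2*F2) * W
        + (2*(h/3*(h/3-1))*(r*b/a)*F0 + (h/3-1)*(r*b/a)^2*F1
            + (2*(r*b/a)^2 + (r*b/a)^3)*Q - (r*b/a)^3*F2) * (1/r) * (b - a/r)
        = μ * r * (b*(a/r)^2 / P) * (r*b/a)) :
    (W*(a/r)^2 + b*((2:ℕ)*(a/r)^(2-1)*((b*r - a*1)/r^2))) * (h/3) * (P / (b*(a/r)^2))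
        * (h/3*F0/b + F1/(a/r))
      + P * ((h/3*(F1*(((1*b + r*W)*a - r*b*b)/a^2))*b - h/3*F0*W)/b^2
          + (F2*(((1*b + r*W)*a - r*b*b)/a^2)*(a/r) - F1*((b*r - a*1)/r^2))/(a/r)^2)
      + 2/r * (P*(h/3*F0/b + F1/(a/r)) - 1/2*(P*(2*(h/3)*F0 - r*b/a*F1)/(a/r)))
    = μ * a := by
  linear_combination (norm := skip) (P/b^2) * hODE
    - (P/b^2*(2*(r*b/a)^2+(r*b/a)^3)/r^2) * hQ
  push_cast
  field_simp
  ring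


/-- Under scale invariance, the radial equation written with the
coefficients `U₁, U₂` implies the general radial Euler–Lagrange equation, and the
scalar boundary value `g(u(1)) = 0` gives `L,₁(φ'(1),φ(1)) = 0`. -/
theorem scale_invariant_radial_equation
    (h μ : ℝ) (f : ℝ → ℝ)
    (hfC3 : ContDiffOn ℝ 3 f (Set.Ioi 0))
    (hf0 : ∀ u : ℝ, 0 < u → 0 ≤ f u)
    (hf'1 : deriv f 1 = 0)
    (φ : ℝ → ℝ)
    (hφC2 : ContDiffOn ℝ 2 φ (Set.Icc 0 1))
    (hφ0 : φ 0 = 0)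
    (hφ''0 : derivWithin (derivWithin φ (Set.Icc 0 1)) (Set.Icc 0 1) 0 = 0)
    (hφ' : ∀ r ∈ Set.Icc (0:ℝ) 1, 0 < derivWithin φ (Set.Icc 0 1) r)
    (hODE : ∀ r ∈ Set.Ioo (0:ℝ) 1,
      U1 h f (r * derivWithin φ (Set.Icc 0 1) r / φ r)
          * derivWithin (derivWithin φ (Set.Icc 0 1)) (Set.Icc 0 1) r
        + U2 h f (r * derivWithin φ (Set.Icc 0 1) r / φ r)
            * (1 / r) * (derivWithin φ (Set.Icc 0 1) r - φ r / r)
        = μ * r * (derivWithin φ (Set.Icc 0 1) r * (φ r / r) ^ 2) ^ (1 - h / 3)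
            * (r * derivWithin φ (Set.Icc 0 1) r / φ r)) :
    (∀ r ∈ Set.Ioo (0:ℝ) 1,
      deriv (fun t => deriv
          (fun s => (s * (φ t / t) ^ 2) ^ (h / 3) * f (s / (φ t / t)))
          (derivWithin φ (Set.Icc 0 1) t)) r
        + (2 / r) *
          (deriv (fun s => (s * (φ r / r) ^ 2) ^ (h / 3) * f (s / (φ r / r)))
              (derivWithin φ (Set.Icc 0 1) r)
            - (1/2) * deriv
                (fun s => (derivWithin φ (Set.Icc 0 1) r * s ^ 2) ^ (h / 3)
                  * f (derivWithin φ (Set.Icc 0 1) r / s)) (φ r / r))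
        = μ * φ r) ∧
    ((h / 3) * f (derivWithin φ (Set.Icc 0 1) 1 / φ 1)
        + (derivWithin φ (Set.Icc 0 1) 1 / φ 1)
          * deriv f (derivWithin φ (Set.Icc 0 1) 1 / φ 1) = 0 →
      deriv (fun s => (s * (φ 1) ^ 2) ^ (h / 3) * f (s / φ 1))
        (derivWithin φ (Set.Icc 0 1) 1) = 0) := by
  have hfd : DifferentiableOn ℝ f (Set.Ioi 0) := hfC3.differentiableOn (by norm_num)
  have hf'C2 : ContDiffOn ℝ 2 (deriv f) (Set.Ioi 0) :=
    hfC3.deriv_of_isOpen isOpen_Ioi (by norm_num)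
  have hf'd : DifferentiableOn ℝ (deriv f) (Set.Ioi 0) := hf'C2.differentiableOn (by norm_num)
  have hfat : ∀ u : ℝ, 0 < u → HasDerivAt f (deriv f u) u := fun u hu =>
    (((hfd u hu).differentiableAt (Ioi_mem_nhds hu))).hasDerivAt
  have hf'at : ∀ u : ℝ, 0 < u → HasDerivAt (deriv f) (deriv (deriv f) u) u := fun u hu =>
    (((hf'd u hu).differentiableAt (Ioi_mem_nhds hu))).hasDerivAt
  have hfdiff : ∀ u : ℝ, 0 < u → DifferentiableAt ℝ f u := fun u hu =>
    (hfd u hu).differentiableAt (Ioi_mem_nhds hu)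
  have huD : UniqueDiffOn ℝ (Set.Icc (0:ℝ) 1) := uniqueDiffOn_Icc zero_lt_one
  have hψC1 : ContDiffOn ℝ 1 (derivWithin φ (Set.Icc 0 1)) (Set.Icc 0 1) :=
    hφC2.derivWithin huD (by norm_num)
  -- strict monotonicity ⇒ positivity of φ on (0,1]
  have hmono : StrictMonoOn φ (Set.Icc 0 1) := by
    apply strictMonoOn_of_deriv_pos (convex_Icc 0 1) (hφC2.continuousOn)
    intro x hx
    rw [interior_Icc] at hx
    have hmem : Set.Icc (0:ℝ) 1 ∈ nhds x := Icc_mem_nhds hx.1 hx.2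
    rw [← derivWithin_of_mem_nhds hmem]
    exact hφ' x ⟨hx.1.le, hx.2.le⟩
  have hφpos : ∀ r : ℝ, 0 < r → r ≤ 1 → 0 < φ r := by
    intro r hr0 hr1
    have := hmono (Set.left_mem_Icc.2 zero_le_one) ⟨hr0.le, hr1⟩ hr0
    rwa [hφ0] at this
  -- has-deriv facts for φ and ψ on the interior
  have hDφat : ∀ r : ℝ, r ∈ Set.Ioo (0:ℝ) 1 → HasDerivAt φ (derivWithin φ (Set.Icc 0 1) r) r := by
    intro r hr
    have hmem : Set.Icc (0:ℝ) 1 ∈ nhds r := Icc_mem_nhds hr.1 hr.2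
    exact (((hφC2.differentiableOn (by norm_num)) r ⟨hr.1.le, hr.2.le⟩).hasDerivWithinAt).hasDerivAt hmem
  have hDψat : ∀ r : ℝ, r ∈ Set.Ioo (0:ℝ) 1 →
      HasDerivAt (derivWithin φ (Set.Icc 0 1))
        (derivWithin (derivWithin φ (Set.Icc 0 1)) (Set.Icc 0 1) r) r := by
    intro r hr
    have hmem : Set.Icc (0:ℝ) 1 ∈ nhds r := Icc_mem_nhds hr.1 hr.2
    exact (((hψC1.differentiableOn (by norm_num)) r ⟨hr.1.le, hr.2.le⟩).hasDerivWithinAt).hasDerivAt hmem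
  constructor
  · intro r hr
    obtain ⟨hr0, hr1⟩ := hr
    set ψ := derivWithin φ (Set.Icc 0 1) with hψdef
    set W := derivWithin ψ (Set.Icc 0 1) r with hWdef
    have hφr : 0 < φ r := hφpos r hr0 hr1.le
    have hψr : 0 < ψ r := hφ' r ⟨hr0.le, hr1.le⟩
    have hcr : 0 < φ r / r := div_pos hφr hr0
    have hur : 0 < r * ψ r / φ r := div_pos (mul_pos hr0 hψr) hφr
    have hvr : 0 < ψ r * (φ r / r) ^ 2 := by positivity
    -- the function F equal to t ↦ L,₁(ψ t, φ t / t) near r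
    set F : ℝ → ℝ := fun t => (ψ t * (φ t / t) ^ 2) ^ (h/3) *
      ((h/3) * f (t * ψ t / φ t) / ψ t + deriv f (t * ψ t / φ t) / (φ t / t)) with hFdef
    have hGF : (fun t => deriv
          (fun s => (s * (φ t / t) ^ 2) ^ (h / 3) * f (s / (φ t / t)))
          (ψ t)) =ᶠ[nhds r] F := by
      filter_upwards [Ioo_mem_nhds hr0 hr1] with t ht
      have hφt : 0 < φ t := hφpos t ht.1 ht.2.le
      have hψt : 0 < ψ t := hφ' t ⟨ht.1.le, ht.2.le⟩
      have hct : 0 < φ t / t := div_pos hφt ht.1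
      have harg : ψ t / (φ t / t) = t * ψ t / φ t := by
        rw [div_div_eq_mul_div, mul_comm]
      rw [derivL1 (h/3) f hψt hct (hfdiff _ (by rw [harg]; exact div_pos (mul_pos ht.1 hψt) hφt)), harg]
    -- derivative of F at r
    have hDφ := hDφat r ⟨hr0, hr1⟩
    have hDψ := hDψat r ⟨hr0, hr1⟩
    have hDc : HasDerivAt (fun t => φ t / t) ((ψ r * r - φ r * 1) / r ^ 2) r :=
      hDφ.div (hasDerivAt_id r) hr0.ne'
    have hDu : HasDerivAt (fun t => t * ψ t / φ t)
        (((1 * ψ r + r * W) * φ r - r * ψ r * ψ r) / φ r ^ 2) r :=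
      ((hasDerivAt_id r).mul hDψ).div hDφ hφr.ne'
    have hDv := hDψ.mul (hDc.pow 2)
    have hDvp := hDv.rpow_const (p := h/3) (Or.inl hvr.ne')
    have hDfu : HasDerivAt (fun t => f (t * ψ t / φ t))
        (deriv f (r * ψ r / φ r) * (((1 * ψ r + r * W) * φ r - r * ψ r * ψ r) / φ r ^ 2)) r :=
      (hfat _ hur).comp r hDu
    have hDf'u : HasDerivAt (fun t => deriv f (t * ψ t / φ t))
        (deriv (deriv f) (r * ψ r / φ r) * (((1 * ψ r + r * W) * φ r - r * ψ r * ψ r) / φ r ^ 2)) r :=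
      by have := (hf'at _ hur).comp r hDu; exact this
    have hDA := ((hDfu.const_mul (h/3)).div hDψ hψr.ne').add (hDf'u.div hDc hcr.ne')
    have hDF := hDvp.mul hDA
    have e1 : deriv (fun t => deriv
          (fun s => (s * (φ t / t) ^ 2) ^ (h / 3) * f (s / (φ t / t)))
          (ψ t)) r = deriv F r := hGF.deriv_eq
    rw [e1, show deriv F r = _ from hDF.deriv]
    simp only [Pi.mul_apply, Pi.pow_apply, Pi.add_apply, Pi.div_apply]
    -- rewrite the two boundary-style derivative terms
    have harg : ψ r / (φ r / r) = r * ψ r / φ r := by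
      rw [div_div_eq_mul_div, mul_comm]
    rw [derivL1 (h/3) f hψr hcr (hfdiff _ (by rw [harg]; exact hur)),
        derivL2 (h/3) f hψr hcr (hfdiff _ (by rw [harg]; exact hur)), harg]
    have hODEr := hODE r ⟨hr0, hr1⟩
    rw [← hWdef] at hODEr ⊢
    rw [Real.rpow_sub_one hvr.ne']
    rw [Real.rpow_sub hvr, Real.rpow_one] at hODEr
    unfold U1 U2 kap at hODEr
    have hPne : (ψ r * (φ r / r) ^ 2) ^ (h/3) ≠ 0 := (Real.rpow_pos_of_pos hvr _).ne'
    have hQ0 := Qf_mul_sub_one hf'1 (r * ψ r / φ r)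
    have hsub : r * ψ r / φ r - 1 = (r * ψ r - φ r) / φ r := by
      field_simp
    rw [hsub, ← mul_div_assoc, div_eq_iff hφr.ne'] at hQ0
    linear_combination keyalg h μ r (φ r) (ψ r) W (f (r * ψ r / φ r))
      (deriv f (r * ψ r / φ r)) (deriv (deriv f) (r * ψ r / φ r))
      (Qf f (r * ψ r / φ r)) ((ψ r * (φ r / r) ^ 2) ^ (h/3))
      hr0.ne' hφr.ne' hψr.ne' hPne hQ0 hODEr
  · intro hg
    have hφ1 : 0 < φ 1 := hφpos 1 one_pos le_rfl
    have hψ1 : 0 < derivWithin φ (Set.Icc 0 1) 1 :=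
      hφ' 1 (Set.right_mem_Icc.2 zero_le_one)
    rw [derivL1 (h/3) f hψ1 hφ1 (hfdiff _ (div_pos hψ1 hφ1))]
    have h2 : h / 3 * f (derivWithin φ (Set.Icc 0 1) 1 / φ 1) / derivWithin φ (Set.Icc 0 1) 1
        + deriv f (derivWithin φ (Set.Icc 0 1) 1 / φ 1) / φ 1 = 0 := by
      field_simp at hg ⊢
      linarith
    rw [h2, mul_zero]
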